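/- If two finite sets H1 and H2 each regularly partition the same regular integer interval [i1,i2], then their union H1 ∪ H2 also regularly partitions [i1,i2]. -/

import Mathlib

/-- Regular integer intervals `[k₁, k₂]`:
`[1, 2^α]` is regular for every `α ≥ 0`, and the upper half `[k₁, (k₁+k₂−1)/2]`
and lower half `[(k₁+k₂+1)/2, k₂]` of every even-length regular interval are regular. -/
inductive Regular : ℕ → ℕ → Prop where
  | base (α : ℕ) : Regular 1 (2 ^ α)
  | upper {k₁ k₂ : ℕ} (h : Regular k₁ k₂) (heven : Even (k₂ - k₁ + 1)) :
      Regular k₁ ((k₁ + k₂ - 1) / 2)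
  | lower {k₁ k₂ : ℕ} (h : Regular k₁ k₂) (heven : Even (k₂ - k₁ + 1)) :
      Regular ((k₁ + k₂ + 1) / 2) k₂

/-- A set `H = {h₁ < h₂ < ⋯ < h_k}` regularly partitions a regular interval `[i₁,i₂]` if
`h₁ = i₁` and the intervals `[h₁,h₂−1], …, [h_{k−1},h_k−1], [h_k,i₂]` are all regular.
(For consecutive members `h < h'` of `H`, the interval `[h, h'−1]` is regular, and for
the largest member `h`, the interval `[h, i₂]` is regular.) -/
def RegularlyPartitions (H : Set ℕ) (i₁ i₂ : ℕ) : Prop :=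
  i₁ ∈ H ∧ (∀ h ∈ H, i₁ ≤ h ∧ h ≤ i₂) ∧
  (∀ h ∈ H, ∀ h' ∈ H, h < h' → (∀ h'' ∈ H, h'' ≤ h ∨ h' ≤ h'') → Regular h (h' - 1)) ∧
  (∀ h ∈ H, (∀ h'' ∈ H, h'' ≤ h) → Regular h i₂)

/-- If two finite sets `H₁` and `H₂` each regularly partition the same
regular integer interval `[i₁,i₂]`, then their union `H₁ ∪ H₂` also regularly
partitions `[i₁,i₂]`. -/

lemma regular_char {a b : ℕ} (h : Regular a b) :
    ∃ β : ℕ, 1 ≤ a ∧ b + 1 = a + 2 ^ β ∧ 2 ^ β ∣ a - 1 := by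
  induction h with
  | base α => exact ⟨α, le_refl 1, by ring, by simp⟩
  | @upper k₁ k₂ h heven ih =>
    obtain ⟨β, ha, hb, hd⟩ := ih
    have hpos : 0 < 2 ^ β := Nat.pow_pos (by norm_num)
    have hβ : β ≠ 0 := by
      rintro rfl
      rw [Nat.even_iff] at heven
      omega
    obtain ⟨γ, rfl⟩ : ∃ γ, β = γ + 1 := ⟨β - 1, by omega⟩
    have h2 : 2 ^ (γ + 1) = 2 * 2 ^ γ := by ring
    refine ⟨γ, ha, ?_, ?_⟩
    · have hpos' : 0 < 2 ^ γ := Nat.pow_pos (by norm_num)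
      omega
    · exact dvd_trans ⟨2, by ring⟩ hd
  | @lower k₁ k₂ h heven ih =>
    obtain ⟨β, ha, hb, hd⟩ := ih
    have hpos : 0 < 2 ^ β := Nat.pow_pos (by norm_num)
    have hβ : β ≠ 0 := by
      rintro rfl
      rw [Nat.even_iff] at heven
      omega
    obtain ⟨γ, rfl⟩ : ∃ γ, β = γ + 1 := ⟨β - 1, by omega⟩
    have h2 : 2 ^ (γ + 1) = 2 * 2 ^ γ := by ring
    have hpos' : 0 < 2 ^ γ := Nat.pow_pos (by norm_num)
    have hs : (k₁ + k₂ + 1) / 2 = k₁ + 2 ^ γ := by omega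
    refine ⟨γ, by omega, by omega, ?_⟩
    have he : (k₁ + k₂ + 1) / 2 - 1 = (k₁ - 1) + 2 ^ γ := by omega
    rw [he]
    exact dvd_add (dvd_trans ⟨2, by ring⟩ hd) dvd_rfl

lemma nest_aux {p q a' c' : ℕ} (hp : 0 < p) (hpq : p ∣ q)
    (hda : p ∣ a') (hdc : q ∣ c')
    (h2 : c' < a' + p) (h1 : a' < c' + q) :
    c' ≤ a' ∧ a' + p ≤ c' + q := by
  obtain ⟨k, rfl⟩ := hpq
  obtain ⟨s, rfl⟩ := hda
  obtain ⟨t, rfl⟩ := hdc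
  constructor
  · have h : p * (k * t) < p * (s + 1) := by
      calc p * (k * t) = p * k * t := by ring
      _ < p * s + p := h2
      _ = p * (s + 1) := by ring
    have := Nat.lt_of_mul_lt_mul_left h
    calc p * k * t = p * (k * t) := by ring
    _ ≤ p * s := Nat.mul_le_mul_left p (by omega)
  · have h : p * s < p * (k * t + k) := by
      calc p * s < p * k * t + p * k := h1
      _ = p * (k * t + k) := by ring
    have := Nat.lt_of_mul_lt_mul_left h
    calc p * s + p = p * (s + 1) := by ring
    _ ≤ p * (k * t + k) := Nat.mul_le_mul_left p (by omega)
    _ = p * k * t + p * k := by ring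

lemma regular_nest {a b c d : ℕ} (hab : Regular a b) (hcd : Regular c d)
    (had : a ≤ d) (hcb : c ≤ b) :
    (a ≤ c ∧ d ≤ b) ∨ (c ≤ a ∧ b ≤ d) := by
  obtain ⟨β, ha, hb, hda⟩ := regular_char hab
  obtain ⟨γ, hc, hd, hdc⟩ := regular_char hcd
  have hpβ : 0 < 2 ^ β := Nat.pow_pos (by norm_num)
  have hpγ : 0 < 2 ^ γ := Nat.pow_pos (by norm_num)
  rcases le_total β γ with hle | hle
  · right
    have := nest_aux hpβ (pow_dvd_pow 2 hle) hda hdc (by omega) (by omega)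
    omega
  · left
    have := nest_aux hpγ (pow_dvd_pow 2 hle) hdc hda (by omega) (by omega)
    omega

lemma rp_piece {H : Finset ℕ} {i₁ i₂ x : ℕ} (hp : RegularlyPartitions (↑H) i₁ i₂)
    (hx1 : i₁ ≤ x) (hx2 : x ≤ i₂) :
    ∃ a b, a ∈ H ∧ a ≤ x ∧ x ≤ b ∧ Regular a b ∧
      (∀ h ∈ H, h ≤ a ∨ b < h) ∧ (b = i₂ ∨ b + 1 ∈ H) := by
  obtain ⟨hmem, hbd, hmid, htop⟩ := hp
  have hmem' : i₁ ∈ H := hmem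
  set S := H.filter (· ≤ x) with hS
  have hSne : S.Nonempty := ⟨i₁, by simp [hS, hx1, hmem']⟩
  set a := S.max' hSne with hadef
  have haS : a ∈ S := S.max'_mem hSne
  have haH : a ∈ H := (Finset.mem_filter.mp haS).1
  have hax : a ≤ x := by simpa using (Finset.mem_filter.mp haS).2
  have hamax : ∀ h ∈ H, h ≤ x → h ≤ a :=
    fun h hh hx => S.le_max' h (Finset.mem_filter.mpr ⟨hh, by simpa⟩)
  set T := H.filter (a < ·) with hT
  by_cases hTne : T.Nonempty
  · set m := T.min' hTne with hmdef
    have hmT : m ∈ T := T.min'_mem hTne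
    have hmH : m ∈ H := (Finset.mem_filter.mp hmT).1
    have ham : a < m := by simpa using (Finset.mem_filter.mp hmT).2
    have hmmin : ∀ h ∈ H, a < h → m ≤ h :=
      fun h hh hx => T.min'_le h (Finset.mem_filter.mpr ⟨hh, by simpa⟩)
    have hxm : x < m := by
      by_contra hc
      have := hamax m hmH (by omega)
      omega
    refine ⟨a, m - 1, haH, hax, by omega, ?_, ?_, ?_⟩
    · exact hmid a haH m hmH ham (fun h'' hh => by
        rcases le_or_gt h'' a with h | h
        · exact Or.inl h
        · exact Or.inr (hmmin h'' hh h))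
    · intro h hh
      rcases le_or_gt h a with h1 | h1
      · exact Or.inl h1
      · have := hmmin h hh h1; omega
    · right
      have : m - 1 + 1 = m := by omega
      rw [this]; exact hmH
  · have hall : ∀ h ∈ H, h ≤ a := by
      intro h hh
      by_contra hc
      exact hTne ⟨h, Finset.mem_filter.mpr ⟨hh, by simpa using hc⟩⟩
    refine ⟨a, i₂, haH, hax, hx2, htop a haH hall, fun h hh => Or.inl (hall h hh), Or.inl rfl⟩

lemma rp_key {H₁ H₂ : Finset ℕ} {i₁ i₂ : ℕ}
    (h₁ : RegularlyPartitions (↑H₁) i₁ i₂) (h₂ : RegularlyPartitions (↑H₂) i₁ i₂)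
    {h h' : ℕ} (hh : h ∈ H₁) (hh' : h' ∈ H₁ ∨ h' ∈ H₂) (hlt : h < h')
    (hgap : ∀ h'', (h'' ∈ H₁ ∨ h'' ∈ H₂) → h'' ≤ h ∨ h' ≤ h'') :
    Regular h (h' - 1) := by
  rcases hh' with hh' | hh'
  · exact h₁.2.2.1 h hh h' hh' hlt (fun h'' hm => hgap h'' (Or.inl hm))
  · have hbd := h₁.2.1 h hh
    have hbd' := h₂.2.1 h' hh'
    obtain ⟨a₁, b₁, ha₁H, ha₁, hb₁, hreg₁, hgap₁, hnext₁⟩ := rp_piece h₁ hbd.1 hbd.2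
    obtain ⟨a₂, b₂, ha₂H, ha₂, hb₂, hreg₂, hgap₂, hnext₂⟩ := rp_piece h₂ hbd.1 hbd.2
    have ha₁h : a₁ = h := by rcases hgap₁ h hh with h1 | h1 <;> omega
    rw [ha₁h] at hreg₁ hgap₁
    have hb₁' : h' - 1 ≤ b₁ := by
      rcases hnext₁ with rfl | hm
      · omega
      · rcases hgap (b₁ + 1) (Or.inl hm) with h1 | h1 <;> omega
    have hb₂' : b₂ = h' - 1 := by
      have hub : b₂ < h' := by
        rcases hgap₂ h' hh' with h1 | h1 <;> omega
      have hlb : h' - 1 ≤ b₂ := by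
        rcases hnext₂ with rfl | hm
        · omega
        · rcases hgap (b₂ + 1) (Or.inr hm) with h1 | h1 <;> omega
      omega
    rcases regular_nest hreg₁ hreg₂ (by omega) (by omega) with ⟨h1, h2⟩ | ⟨h1, h2⟩
    · have : a₂ = h := by omega
      rw [← this, ← hb₂']; exact hreg₂
    · have : b₁ = h' - 1 := by omega
      rwa [← this]

theorem regularlyPartitions_union (H₁ H₂ : Finset ℕ) (i₁ i₂ : ℕ)
    (hreg : Regular i₁ i₂)
    (h₁ : RegularlyPartitions (↑H₁) i₁ i₂) (h₂ : RegularlyPartitions (↑H₂) i₁ i₂) :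
    RegularlyPartitions (↑(H₁ ∪ H₂)) i₁ i₂ := by
  refine ⟨?_, ?_, ?_, ?_⟩
  · simp only [Finset.coe_union, Set.mem_union, Finset.mem_coe]
    exact Or.inl h₁.1
  · intro h hh
    simp only [Finset.coe_union, Set.mem_union, Finset.mem_coe] at hh
    rcases hh with hh | hh
    · exact h₁.2.1 h hh
    · exact h₂.2.1 h hh
  · intro h hh h' hh' hlt hgap
    simp only [Finset.coe_union, Set.mem_union, Finset.mem_coe] at hh hh'
    have hgap' : ∀ h'', (h'' ∈ H₁ ∨ h'' ∈ H₂) → h'' ≤ h ∨ h' ≤ h'' := by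
      intro h'' hm
      exact hgap h'' (by simp only [Finset.coe_union, Set.mem_union, Finset.mem_coe]; exact hm)
    rcases hh with hh | hh
    · exact rp_key h₁ h₂ hh hh' hlt hgap'
    · exact rp_key h₂ h₁ hh hh'.symm hlt (fun h'' hm => hgap' h'' hm.symm)
  · intro h hh htop
    simp only [Finset.coe_union, Set.mem_union, Finset.mem_coe] at hh
    have htop' : ∀ h'', (h'' ∈ H₁ ∨ h'' ∈ H₂) → h'' ≤ h := by
      intro h'' hm
      exact htop h'' (by simp only [Finset.coe_union, Set.mem_union, Finset.mem_coe]; exact hm)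
    rcases hh with hh | hh
    · exact h₁.2.2.2 h hh (fun h'' hm => htop' h'' (Or.inl hm))
    · exact h₂.2.2.2 h hh (fun h'' hm => htop' h'' (Or.inr hm))
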